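/- Let s ≥ 1, L ≥ 2s³ + 5s² + 1 and L ≤ k ≤ s + L be integers, and let n ≥ 2s⁵ + 8s⁴ + s³ − 14s² + 3s + 1. Then the number of partitions in C³_{L,s,2}(n) is at most the number of partitions in F³_{L,s,k}(n), where: C³_{L,s,2}(n) is the set of partitions of n with all parts in {s+1, …, s+L}, with no part equal to k, with no part equal to a·s for any integer a ≥ 2, and in which every part j with s+1 ≤ j ≤ 2s² + 5s − 1 occurs at most s − 1 times; and F³_{L,s,k}(n) is the set of partitions of n with smallest part s, largest part at most s+L, no part equal to k, in which the part s occurs exactly once and the multiplicities g_{2s} and g_{3s} of the parts 2s and 3s satisfy g_{2s} + g_{3s} ≥ 2. -/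
import Mathlib

open Multiset

set_option maxHeartbeats 1000000

/-- The multiset `{s} + a·{2s} + b·{3s} + (s+1)·{s+ρ}` that replaces the big part. -/
private def Amul (s a b ρ : ℕ) : Multiset ℕ :=
  s ::ₘ (Multiset.replicate a (2 * s) + Multiset.replicate b (3 * s) +
    Multiset.replicate (s + 1) (s + ρ))

private lemma Amul_mem {s a b ρ v : ℕ} (h : v ∈ Amul s a b ρ) :
    v = s ∨ v = 2 * s ∨ v = 3 * s ∨ v = s + ρ := by
  simp only [Amul, Multiset.mem_cons, Multiset.mem_add, Multiset.mem_replicate] at h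
  tauto

private lemma Amul_sum (s a b ρ : ℕ) :
    (Amul s a b ρ).sum = s + a * (2 * s) + b * (3 * s) + (s + 1) * (s + ρ) := by
  simp only [Amul, Multiset.sum_cons, Multiset.sum_add, Multiset.sum_replicate, smul_eq_mul]
  ring

private lemma Amul_count (s a b ρ v : ℕ) :
    Multiset.count v (Amul s a b ρ) =
      (if v = s then 1 else 0) + (if v = 2 * s then a else 0) +
      (if v = 3 * s then b else 0) + (if v = s + ρ then s + 1 else 0) := by
  simp only [Amul, Multiset.count_cons, Multiset.count_add, Multiset.count_replicate]
  split_ifs <;> omega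

private lemma key (s L k n : ℕ) (hs2 : 2 ≤ s)
    (hL : 2 * s ^ 3 + 5 * s ^ 2 + 1 ≤ L) (hkL : L ≤ k)
    (hn : 2 * s ^ 5 + 8 * s ^ 4 + s ^ 3 + 3 * s + 1 ≤ n + 14 * s ^ 2)
    (p : n.Partition)
    (hp : (∀ j ∈ p.parts, s + 1 ≤ j ∧ j ≤ s + L) ∧ k ∉ p.parts ∧
        (∀ a : ℕ, 2 ≤ a → a * s ∉ p.parts) ∧
        ∀ j : ℕ, s + 1 ≤ j → j ≤ 2 * s ^ 2 + 5 * s - 1 →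
          Multiset.count j p.parts ≤ s - 1) :
    ∃ q : n.Partition,
      ((s ∈ q.parts ∧ ∀ j ∈ q.parts, s ≤ j ∧ j ≤ s + L) ∧ k ∉ q.parts ∧
        Multiset.count s q.parts = 1 ∧
        2 ≤ Multiset.count (2 * s) q.parts + Multiset.count (3 * s) q.parts) ∧
      ∃ j a b ρ : ℕ, j ∈ p.parts ∧ 1 ≤ ρ ∧ ρ < s ∧
        q.parts = p.parts.erase j + Amul s a b ρ ∧
        j = s + (2 * a + 3 * b) * s + (s + 1) * (s + ρ) := by
  obtain ⟨h1, h2, h3, h4⟩ := hp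
  have hss : s ≤ s ^ 2 := by nlinarith
  have hLs : 3 * s < L := by nlinarith
  -- p has a big part
  have hbig : ∃ x ∈ p.parts, 2 * s ^ 2 + 5 * s + 1 ≤ x := by
    by_contra hcon
    push_neg at hcon
    have hM : ∀ x ∈ p.parts, x ≤ 2 * s ^ 2 + 5 * s - 1 := by
      intro x hx
      have hx1 := hcon x hx
      have hxne : x ≠ 2 * s ^ 2 + 5 * s := by
        intro he
        refine h3 (2 * s + 5) (by omega) ?_
        have hr : (2 * s + 5) * s = 2 * s ^ 2 + 5 * s := by ring
        rw [hr, ← he]; exact hx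
      omega
    set M := 2 * s ^ 2 + 5 * s - 1 with hMdef
    have hM1 : M + 1 = 2 * s ^ 2 + 5 * s := by omega
    have hle : p.parts ≤ (s - 1) • (Finset.Icc (s + 1) M).val := by
      rw [Multiset.le_iff_count]
      intro v
      by_cases hv : v ∈ p.parts
      · have hc := h4 v (h1 v hv).1 (hM v hv)
        have hvmem : v ∈ Finset.Icc (s + 1) M := Finset.mem_Icc.2 ⟨(h1 v hv).1, hM v hv⟩
        rw [Multiset.count_nsmul,
          Multiset.count_eq_one_of_mem (Finset.Icc (s + 1) M).nodup hvmem]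
        omega
      · rw [Multiset.count_eq_zero.2 hv]; exact Nat.zero_le _
    have hsum1 : p.parts.sum ≤ ((s - 1) • (Finset.Icc (s + 1) M).val).sum := by
      obtain ⟨u, hu⟩ := Multiset.le_iff_exists_add.mp hle
      rw [hu, Multiset.sum_add]; exact Nat.le_add_right _ _
    have hsum2 : ∀ (c : ℕ) (m : Multiset ℕ), (c • m).sum = c * m.sum := by
      intro c m
      induction c with
      | zero => simp
      | succ d ih => rw [succ_nsmul, Multiset.sum_add, ih]; ring
    set G := ((Finset.Icc (s + 1) M).val).sum with hG
    have hGsum : ∑ i ∈ Finset.Icc (s + 1) M, i = G := by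
      rw [Finset.sum_eq_multiset_sum]
      simp [hG]
    have hIcc : Finset.Icc (s + 1) M = Finset.Ico (s + 1) (M + 1) := by
      rw [Finset.Ico_add_one_right_eq_Icc]
    have hGauss : (∑ i ∈ Finset.Ico 0 (s + 1), i) + (∑ i ∈ Finset.Ico (s + 1) (M + 1), i)
        = ∑ i ∈ Finset.Ico 0 (M + 1), i :=
      Finset.sum_Ico_consecutive _ (by omega) (by omega)
    have hrange : ∀ m : ℕ, 2 * ∑ i ∈ Finset.Ico 0 m, i = m * (m - 1) := by
      intro m
      rw [← Finset.range_eq_Ico]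
      have := Finset.sum_range_id_mul_two m
      omega
    have e1 : 2 * ∑ i ∈ Finset.Ico 0 (s + 1), i = (s + 1) * s := by
      rw [hrange]; simp
    have e2 : 2 * ∑ i ∈ Finset.Ico 0 (M + 1), i = (M + 1) * M := by
      rw [hrange]; simp
    have hGauss2 : (∑ i ∈ Finset.Ico 0 (s + 1), i) + G = ∑ i ∈ Finset.Ico 0 (M + 1), i := by
      rw [← hGsum, hIcc]; exact hGauss
    have hkey1 : (s + 1) * s + 2 * G = (M + 1) * M := by linarith
    have hsum3 : n ≤ (s - 1) * G := by
      rw [← p.parts_sum]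
      calc p.parts.sum ≤ ((s - 1) • (Finset.Icc (s + 1) M).val).sum := hsum1
        _ = (s - 1) * G := by rw [hsum2]
    have hkey2 : (s + 1) * s + 2 * G + (2 * s ^ 2 + 5 * s)
        = (2 * s ^ 2 + 5 * s) * (2 * s ^ 2 + 5 * s) := by
      have h' : (M + 1) * M + (M + 1) = (M + 1) * (M + 1) := by ring
      rw [hM1] at h'
      rw [hM1] at hkey1
      linarith
    obtain ⟨d, rfl⟩ : ∃ d, s = d + 2 := ⟨s - 2, by omega⟩
    have hsum4 : n ≤ (d + 1) * G := by
      have : d + 2 - 1 = d + 1 := by omega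
      rwa [this] at hsum3
    have hkey3 : (d + 1) * (((d + 2) + 1) * (d + 2) + 2 * G + (2 * (d + 2) ^ 2 + 5 * (d + 2)))
        = (d + 1) * ((2 * (d + 2) ^ 2 + 5 * (d + 2)) * (2 * (d + 2) ^ 2 + 5 * (d + 2))) := by
      rw [hkey2]
    have h2n : 2 * n ≤ 2 * ((d + 1) * G) := by
      exact Nat.mul_le_mul_left 2 hsum4
    nlinarith [hkey3, h2n, hn]
  obtain ⟨j, hjmem, hjge⟩ := hbig
  have hspos : 0 < s := by omega
  set ρ := j % s with hρdef
  have hρlt : ρ < s := Nat.mod_lt _ hspos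
  have hρ1 : 1 ≤ ρ := by
    rcases Nat.eq_zero_or_pos ρ with h0 | h
    · exfalso
      have hdvd : s ∣ j := Nat.dvd_of_mod_eq_zero h0
      have hj2 : j = (j / s) * s := (Nat.div_mul_cancel hdvd).symm
      refine h3 (j / s) ?_ (hj2 ▸ hjmem)
      have h2s : 2 * s ≤ j := by nlinarith
      exact (Nat.le_div_iff_mul_le hspos).2 h2s
    · exact h
  have hu : 2 * s + 5 ≤ j / s := by
    refine (Nat.le_div_iff_mul_le hspos).2 ?_
    nlinarith
  set t := j / s - (s + 2 + ρ) with htdef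
  have htu : t + (s + 2 + ρ) = j / s := by omega
  have ht4 : 4 ≤ t := by omega
  set b := t % 2 with hbdef
  set a := (t - 3 * b) / 2 with hadef
  have hab : 2 * a + 3 * b = t := by omega
  have habge : 2 ≤ a + b := by omega
  have hdm : s * (j / s) + ρ = j := Nat.div_add_mod j s
  have hjeq : j = s + (2 * a + 3 * b) * s + (s + 1) * (s + ρ) := by
    rw [hab]
    have h' : s * (t + (s + 2 + ρ)) + ρ = j := by rw [htu]; exact hdm
    rw [← h']; ring
  have hQsum : (p.parts.erase j + Amul s a b ρ).sum = n := by
    have e1 : j + (p.parts.erase j).sum = n := by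
      rw [← Multiset.sum_cons, Multiset.cons_erase hjmem, p.parts_sum]
    have e2 : (Amul s a b ρ).sum = j := by rw [Amul_sum, hjeq]; ring
    rw [Multiset.sum_add, e2]; omega
  have hQpos : ∀ {i : ℕ}, i ∈ p.parts.erase j + Amul s a b ρ → 0 < i := by
    intro i hi
    rw [Multiset.mem_add] at hi
    rcases hi with hi | hi
    · have := (h1 i (Multiset.mem_of_mem_erase hi)).1; omega
    · rcases Amul_mem hi with h | h | h | h <;> omega
  refine ⟨⟨p.parts.erase j + Amul s a b ρ, hQpos, hQsum⟩, ⟨⟨?_, ?_⟩, ?_, ?_, ?_⟩,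
    j, a, b, ρ, hjmem, hρ1, hρlt, rfl, hjeq⟩
  · exact Multiset.mem_add.2 (Or.inr (Multiset.mem_cons_self _ _))
  · intro x hx
    rcases Multiset.mem_add.1 hx with hx | hx
    · have := h1 x (Multiset.mem_of_mem_erase hx); omega
    · rcases Amul_mem hx with h | h | h | h <;> omega
  · intro hk'
    rcases Multiset.mem_add.1 hk' with hk' | hk'
    · exact h2 (Multiset.mem_of_mem_erase hk')
    · rcases Amul_mem hk' with h | h | h | h <;> omega
  · have hcz : Multiset.count s (p.parts.erase j) = 0 := by
      rw [Multiset.count_eq_zero]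
      intro hmem
      have := (h1 s (Multiset.mem_of_mem_erase hmem)).1; omega
    rw [Multiset.count_add, hcz, Amul_count]
    split_ifs <;> omega
  · have c2 : Multiset.count (2 * s) (p.parts.erase j) = 0 :=
      Multiset.count_eq_zero.2 (fun hm => h3 2 le_rfl (Multiset.mem_of_mem_erase hm))
    have c3 : Multiset.count (3 * s) (p.parts.erase j) = 0 :=
      Multiset.count_eq_zero.2 (fun hm => h3 3 (by omega) (Multiset.mem_of_mem_erase hm))
    rw [Multiset.count_add, Multiset.count_add, c2, c3, Amul_count, Amul_count]
    split_ifs <;> omega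

/-- The hypothesis `2s⁵ + 8s⁴ + s³ − 14s² + 3s + 1 ≤ n` is stated as
`2s⁵ + 8s⁴ + s³ + 3s + 1 ≤ n + 14s²` to avoid truncated subtraction in ℕ. -/
theorem stmt_13 (s L k : ℕ) (hs : 1 ≤ s)
    (hL : 2 * s ^ 3 + 5 * s ^ 2 + 1 ≤ L) (hkL : L ≤ k) (hk : k ≤ s + L)
    (n : ℕ) (hn : 2 * s ^ 5 + 8 * s ^ 4 + s ^ 3 + 3 * s + 1 ≤ n + 14 * s ^ 2) :
    -- `C³_{L,s,2}(n)`: partitions of `n` with all parts in `{s+1,…,s+L}`, no part equal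
    -- to `k`, no part equal to `a·s` for any `a ≥ 2`, and every part `j` with
    -- `s+1 ≤ j ≤ 2s²+5s−1` occurring at most `s−1` times.
    Nat.card {p : n.Partition //
        (∀ j ∈ p.parts, s + 1 ≤ j ∧ j ≤ s + L) ∧ k ∉ p.parts ∧
        (∀ a : ℕ, 2 ≤ a → a * s ∉ p.parts) ∧
        ∀ j : ℕ, s + 1 ≤ j → j ≤ 2 * s ^ 2 + 5 * s - 1 →
          Multiset.count j p.parts ≤ s - 1}
    -- `F³_{L,s,k}(n)`: partitions of `n` with smallest part `s`, largest part at most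
    -- `s+L`, no part equal to `k`, in which `s` occurs exactly once and
    -- `g_{2s} + g_{3s} ≥ 2`.
    ≤ Nat.card {p : n.Partition //
        (s ∈ p.parts ∧ ∀ j ∈ p.parts, s ≤ j ∧ j ≤ s + L) ∧ k ∉ p.parts ∧
        Multiset.count s p.parts = 1 ∧
        2 ≤ Multiset.count (2 * s) p.parts + Multiset.count (3 * s) p.parts} := by
  rcases eq_or_lt_of_le hs with h1 | hs2
  · -- case s = 1 : the left set is empty
    subst h1
    have hemp : IsEmpty {p : n.Partition //
        (∀ j ∈ p.parts, 1 + 1 ≤ j ∧ j ≤ 1 + L) ∧ k ∉ p.parts ∧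
        (∀ a : ℕ, 2 ≤ a → a * 1 ∉ p.parts) ∧
        ∀ j : ℕ, 1 + 1 ≤ j → j ≤ 2 * 1 ^ 2 + 5 * 1 - 1 →
          Multiset.count j p.parts ≤ 1 - 1} := by
      refine ⟨fun pp => ?_⟩
      obtain ⟨p, hp1, hp2, hp3, hp4⟩ := pp
      have hz : p.parts = 0 := by
        refine Multiset.eq_zero_of_forall_notMem (fun x hx => ?_)
        have h2x := (hp1 x hx).1
        exact hp3 x (by omega) (by simpa using hx)
      have h0 : n = 0 := by rw [← p.parts_sum, hz]; rfl
      norm_num at hn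
      omega
    rw [Nat.card_of_isEmpty]
    exact Nat.zero_le _
  · have hs2' : 2 ≤ s := hs2
    have key' := fun (pp : {p : n.Partition //
        (∀ j ∈ p.parts, s + 1 ≤ j ∧ j ≤ s + L) ∧ k ∉ p.parts ∧
        (∀ a : ℕ, 2 ≤ a → a * s ∉ p.parts) ∧
        ∀ j : ℕ, s + 1 ≤ j → j ≤ 2 * s ^ 2 + 5 * s - 1 →
          Multiset.count j p.parts ≤ s - 1}) =>
      key s L k n hs2' hL hkL hn pp.1 pp.2
    refine Nat.card_le_card_of_injective
      (fun pp => ⟨(key' pp).choose, (key' pp).choose_spec.1⟩) ?_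
    intro p1 p2 hf
    obtain ⟨j1, a1, b1, ρ1, hmem1, hρ11, hρ1s, hE1, hj1⟩ := (key' p1).choose_spec.2
    obtain ⟨j2, a2, b2, ρ2, hmem2, hρ21, hρ2s, hE2, hj2⟩ := (key' p2).choose_spec.2
    have hq : (key' p1).choose = (key' p2).choose := congrArg Subtype.val hf
    have hE : p1.1.parts.erase j1 + Amul s a1 b1 ρ1
        = p2.1.parts.erase j2 + Amul s a2 b2 ρ2 := by
      rw [← hE1, ← hE2, hq]
    obtain ⟨h11, h12, h13, h14⟩ := p1.2
    obtain ⟨h21, h22, h23, h24⟩ := p2.2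
    have count_fun : ∀ v, Multiset.count v (p1.1.parts.erase j1)
        + Multiset.count v (Amul s a1 b1 ρ1)
        = Multiset.count v (p2.1.parts.erase j2) + Multiset.count v (Amul s a2 b2 ρ2) := by
      intro v
      rw [← Multiset.count_add, ← Multiset.count_add, hE]
    have z12 : Multiset.count (2 * s) (p1.1.parts.erase j1) = 0 :=
      Multiset.count_eq_zero.2 (fun hm => h13 2 le_rfl (Multiset.mem_of_mem_erase hm))
    have z22 : Multiset.count (2 * s) (p2.1.parts.erase j2) = 0 :=
      Multiset.count_eq_zero.2 (fun hm => h23 2 le_rfl (Multiset.mem_of_mem_erase hm))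
    have z13 : Multiset.count (3 * s) (p1.1.parts.erase j1) = 0 :=
      Multiset.count_eq_zero.2 (fun hm => h13 3 (by omega) (Multiset.mem_of_mem_erase hm))
    have z23 : Multiset.count (3 * s) (p2.1.parts.erase j2) = 0 :=
      Multiset.count_eq_zero.2 (fun hm => h23 3 (by omega) (Multiset.mem_of_mem_erase hm))
    have ha : a1 = a2 := by
      have hcnt := count_fun (2 * s)
      rw [z12, z22, Amul_count, Amul_count] at hcnt
      split_ifs at hcnt <;> omega
    have hb : b1 = b2 := by
      have hcnt := count_fun (3 * s)
      rw [z13, z23, Amul_count, Amul_count] at hcnt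
      split_ifs at hcnt <;> omega
    have hss : s ≤ s ^ 2 := by nlinarith
    have hρeq : ρ1 = ρ2 := by
      by_contra hne
      have hcnt := count_fun (s + ρ1)
      rw [Amul_count, Amul_count] at hcnt
      have hb2 : Multiset.count (s + ρ1) (p2.1.parts.erase j2) ≤ s - 1 := by
        refine le_trans (Multiset.count_le_of_le _ (Multiset.erase_le _ _)) ?_
        exact h24 (s + ρ1) (by omega) (by omega)
      split_ifs at hcnt <;> omega
    have hj : j1 = j2 := by rw [hj1, hj2, ha, hb, hρeq]
    have herase : p1.1.parts.erase j1 = p2.1.parts.erase j2 := by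
      have hE' := hE
      rw [ha, hb, hρeq] at hE'
      exact add_right_cancel hE'
    have hparts : p1.1.parts = p2.1.parts := by
      rw [← Multiset.cons_erase hmem1, ← Multiset.cons_erase hmem2, herase, hj]
    exact Subtype.ext (Nat.Partition.ext hparts)
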